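/- Let F be a graph with n nodes. Then for every quadruple (i,j,k,l) of pairwise distinct elements of I_n, one has [u(ik), u(jl)] = [u(jk), u(il)] in Q(F), where [x,y] = xy − yx. -/

import Mathlib

/-- Index type for the generators `z_{A,i}` of `Qₙ`: pairs `(A, i)` with
`A ⊆ Iₙ` and `i ∉ A`. -/
abbrev QIdx (n : ℕ) := {p : Finset (Fin n) × Fin n // p.2 ∉ p.1}

/-- The defining relations of the algebra `Qₙ`:
additive relations `z_{A∪{i},j} + z_{A,i} = z_{A∪{j},i} + z_{A,j}` and
multiplicative relations `z_{A∪{i},j} · z_{A,i} = z_{A∪{j},i} · z_{A,j}`. -/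
inductive QnRel (K : Type*) [Field K] (n : ℕ) :
    FreeAlgebra K (QIdx n) → FreeAlgebra K (QIdx n) → Prop
  | add (A : Finset (Fin n)) (i j : Fin n) (hi : i ∉ A) (hj : j ∉ A) (hij : i ≠ j) :
      QnRel K n
        (FreeAlgebra.ι K (⟨(insert i A, j), by simp [Finset.mem_insert, hij.symm, hj]⟩ : QIdx n)
          + FreeAlgebra.ι K (⟨(A, i), hi⟩ : QIdx n))
        (FreeAlgebra.ι K (⟨(insert j A, i), by simp [Finset.mem_insert, hij, hi]⟩ : QIdx n)
          + FreeAlgebra.ι K (⟨(A, j), hj⟩ : QIdx n))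
  | mul (A : Finset (Fin n)) (i j : Fin n) (hi : i ∉ A) (hj : j ∉ A) (hij : i ≠ j) :
      QnRel K n
        (FreeAlgebra.ι K (⟨(insert i A, j), by simp [Finset.mem_insert, hij.symm, hj]⟩ : QIdx n)
          * FreeAlgebra.ι K (⟨(A, i), hi⟩ : QIdx n))
        (FreeAlgebra.ι K (⟨(insert j A, i), by simp [Finset.mem_insert, hij, hi]⟩ : QIdx n)
          * FreeAlgebra.ι K (⟨(A, j), hj⟩ : QIdx n))

/-- The algebra `Qₙ`: the quotient of the free associative unital `K`-algebra on the
generators `z_{A,i}` by the two-sided ideal generated by the defining relations. -/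
abbrev Qn (K : Type*) [Field K] (n : ℕ) := RingQuot (QnRel K n)

/-- The image `z_{A,i}` of a generator in `Qₙ` (junk value `0` if `i ∈ A`). -/
noncomputable def zQ (K : Type*) [Field K] (n : ℕ) (A : Finset (Fin n)) (i : Fin n) : Qn K n :=
  if h : i ∉ A then RingQuot.mkAlgHom K (QnRel K n) (FreeAlgebra.ι K (⟨(A, i), h⟩ : QIdx n))
  else 0

/-- The element `u(A) = Σ_{D ⊆ A \ {i}} (−1)^{|A|−|D|} z_{D,i}` for the choice `i = min A`
(for nonempty `A`), with `u(∅) = 1`. -/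
noncomputable def uQ (K : Type*) [Field K] (n : ℕ) (A : Finset (Fin n)) : Qn K n :=
  if h : A.Nonempty then
    ∑ D ∈ (A.erase (A.min' h)).powerset,
      (-1 : Qn K n) ^ (A.card - D.card) * zQ K n D (A.min' h)
  else 1

/-- The relations defining `Q(F)`: each `u(A)` with nonempty `A ∉ F` is set to `0`. -/
inductive QcRel (K : Type*) [Field K] (n : ℕ) (F : Set (Finset (Fin n))) :
    Qn K n → Qn K n → Prop
  | rel (A : Finset (Fin n)) (hA : A.Nonempty) (hAF : A ∉ F) : QcRel K n F (uQ K n A) 0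

/-- The algebra `Q(F)`: the quotient of `Qₙ` by the two-sided ideal generated by all
`u(A)` with nonempty `A ∉ F`. -/
abbrev Qc (K : Type*) [Field K] (n : ℕ) (F : Set (Finset (Fin n))) := RingQuot (QcRel K n F)

/-- The image of `u(A)` in `Q(F)`. -/
noncomputable def uc (K : Type*) [Field K] (n : ℕ) (F : Set (Finset (Fin n)))
    (A : Finset (Fin n)) : Qc K n F :=
  RingQuot.mkAlgHom K (QcRel K n F) (uQ K n A)
section GenericRing
variable {R : Type*} [Ring R]

private lemma g1' (x : R) : (-1 : R) ^ (1:ℕ) * x = -x := by noncomm_ring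

private lemma g2' (x y : R) :
    (-1 : R) ^ (2:ℕ) * x + (-1 : R) ^ (1:ℕ) * y = x - y := by noncomm_ring

private lemma g3' (x y z w : R) :
    ((-1 : R) ^ (3:ℕ) * x + (-1 : R) ^ (2:ℕ) * y) + ((-1 : R) ^ (2:ℕ) * z + (-1 : R) ^ (1:ℕ) * w)
      = -(x - z - y + w) := by noncomm_ring

private lemma g4' (p a b d c e f g : R) :
    ((((-1 : R) ^ (4:ℕ) * p + (-1 : R) ^ (3:ℕ) * a) + ((-1 : R) ^ (3:ℕ) * b + (-1 : R) ^ (2:ℕ) * d))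
      + (((-1 : R) ^ (3:ℕ) * c + (-1 : R) ^ (2:ℕ) * e) + ((-1 : R) ^ (2:ℕ) * f + (-1 : R) ^ (1:ℕ) * g)))
      = p - c - b - a + f + e + d - g := by noncomm_ring

private lemma glin3 {p q r s t u v w : R} (h1 : v + u = w + r) (h2 : q + t = s + p) :
    p - q - r + v = t - s - u + w := by
  have hv : v = w + r - u := eq_sub_of_add_eq h1
  have hq : q = s + p - t := eq_sub_of_add_eq h2
  rw [hv, hq]; abel

private lemma glin4 {p0 px py pz pxy pxz pyz pxyz q0 qm qy qz qmy qmz qyz qmyz : R}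
    (h0 : px + q0 = qm + p0) (hy : pxy + qy = qmy + py)
    (hz : pxz + qz = qmz + pz) (hyz : pxyz + qyz = qmyz + pyz) :
    p0 - px - py - pz + pxy + pxz + pyz - pxyz
      = q0 - qm - qy - qz + qmy + qmz + qyz - qmyz := by
  have h0' : px = qm + p0 - q0 := eq_sub_of_add_eq h0
  have hy' : pxy = qmy + py - qy := eq_sub_of_add_eq hy
  have hz' : pxz = qmz + pz - qz := eq_sub_of_add_eq hz
  have hyz' : pxyz = qmyz + pyz - qyz := eq_sub_of_add_eq hyz
  rw [h0', hy', hz', hyz']; abel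

private lemma gcomm3 (a b c d : R) : a - b - c + d = a - c - b + d := by abel

private lemma gperm_xy (p a b c d e f g : R) :
    p - a - b - c + d + e + f - g = p - b - a - c + d + f + e - g := by abel

private lemma gperm_xz (p a b c d e f g : R) :
    p - a - b - c + d + e + f - g = p - c - b - a + f + e + d - g := by abel

private lemma gneg_zero {a : R} (h : -a = 0) : a = 0 := neg_eq_zero.mp h

private lemma gpair {u p q : R} (h : u = p - q) : q = p - u := by rw [h]; abel

private lemma gt3 {p qx qy pxy ux uy : R} (h : p - qx - qy + pxy = 0)
    (hx : qx = p - ux) (hy : qy = p - uy) : pxy = p - ux - uy := by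
  have h' : p - qx - qy + pxy = pxy - (p - ux - uy) := by rw [hx, hy]; abel
  rw [h'] at h
  exact sub_eq_zero.mp h

private lemma gt4 {p qx qy qz pxy pxz pyz pxyz ux uy uz : R}
    (h : p - qx - qy - qz + pxy + pxz + pyz - pxyz = 0)
    (hx : qx = p - ux) (hy : qy = p - uy) (hz : qz = p - uz)
    (hxy : pxy = p - ux - uy) (hxz : pxz = p - ux - uz) (hyz : pyz = p - uy - uz) :
    pxyz = p - ux - uy - uz := by
  have h' : p - qx - qy - qz + pxy + pxz + pyz - pxyz = (p - ux - uy - uz) - pxyz := by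
    rw [hx, hy, hz, hxy, hxz, hyz]; abel
  rw [h'] at h
  exact (sub_eq_zero.mp h).symm

private lemma cert {Ai Aj Eij Eik Eil Ejk Ejl : R}
    (h0 : (Aj - Eij) * Ai = (Ai - Eij) * Aj)
    (hk : (Aj - Eij - Ejk) * (Ai - Eik) = (Ai - Eij - Eik) * (Aj - Ejk))
    (hl : (Aj - Eij - Ejl) * (Ai - Eil) = (Ai - Eij - Eil) * (Aj - Ejl))
    (hkl : (Aj - Eij - Ejk - Ejl) * (Ai - Eik - Eil)
      = (Ai - Eij - Eik - Eil) * (Aj - Ejk - Ejl)) :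
    Eik * Ejl - Ejl * Eik = Ejk * Eil - Eil * Ejk := by
  have key : (Eik * Ejl - Ejl * Eik) - (Ejk * Eil - Eil * Ejk)
      = (((Aj - Eij - Ejk) * (Ai - Eik) - (Ai - Eij - Eik) * (Aj - Ejk))
        + ((Aj - Eij - Ejl) * (Ai - Eil) - (Ai - Eij - Eil) * (Aj - Ejl)))
        - (((Aj - Eij) * Ai - (Ai - Eij) * Aj)
        + ((Aj - Eij - Ejk - Ejl) * (Ai - Eik - Eil)
            - (Ai - Eij - Eik - Eil) * (Aj - Ejk - Ejl))) := by
    noncomm_ring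
  rw [h0, hk, hl, hkl] at key
  simp only [sub_self, add_zero, zero_add, sub_zero, zero_sub, neg_zero] at key
  exact sub_eq_zero.mp key

end GenericRing
section Aux
variable (K : Type*) [Field K] (n : ℕ)

lemma zQ_eq (A : Finset (Fin n)) (a : Fin n) (h : a ∉ A) :
    zQ K n A a = RingQuot.mkAlgHom K (QnRel K n) (FreeAlgebra.ι K (⟨(A, a), h⟩ : QIdx n)) :=
  dif_pos h

lemma zadd (A : Finset (Fin n)) (a b : Fin n) (ha : a ∉ A) (hb : b ∉ A) (hab : a ≠ b) :
    zQ K n (insert a A) b + zQ K n A a = zQ K n (insert b A) a + zQ K n A b := by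
  have hb' : b ∉ insert a A := by simp [Finset.mem_insert, hab.symm, hb]
  have ha' : a ∉ insert b A := by simp [Finset.mem_insert, hab, ha]
  rw [zQ_eq K n _ _ hb', zQ_eq K n _ _ ha, zQ_eq K n _ _ ha', zQ_eq K n _ _ hb,
    ← map_add, ← map_add]
  exact RingQuot.mkAlgHom_rel K (QnRel.add A a b ha hb hab)

lemma zmul (A : Finset (Fin n)) (a b : Fin n) (ha : a ∉ A) (hb : b ∉ A) (hab : a ≠ b) :
    zQ K n (insert a A) b * zQ K n A a = zQ K n (insert b A) a * zQ K n A b := by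
  have hb' : b ∉ insert a A := by simp [Finset.mem_insert, hab.symm, hb]
  have ha' : a ∉ insert b A := by simp [Finset.mem_insert, hab, ha]
  rw [zQ_eq K n _ _ hb', zQ_eq K n _ _ ha, zQ_eq K n _ _ ha', zQ_eq K n _ _ hb,
    ← map_mul, ← map_mul]
  exact RingQuot.mkAlgHom_rel K (QnRel.mul A a b ha hb hab)

end Aux
section Aux2
variable (K : Type*) [Field K] (n : ℕ)

lemma uQ_singleton (a : Fin n) : uQ K n {a} = - zQ K n ∅ a := by
  rw [uQ, dif_pos (Finset.singleton_nonempty a)]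
  simp only [Finset.min'_singleton, Finset.erase_singleton, Finset.powerset_empty,
    Finset.sum_singleton, Finset.card_singleton, Finset.card_empty]
  exact g1' (zQ K n ∅ a)

lemma min'_eq_of_lt {s : Finset (Fin n)} (hs : s.Nonempty) (a : Fin n) (ha : a ∈ s)
    (h : ∀ b ∈ s, b ≠ a → a < b) : s.min' hs = a := by
  apply le_antisymm (Finset.min'_le s a ha)
  apply Finset.le_min'
  intro y hy
  rcases eq_or_ne y a with rfl | hne
  · exact le_rfl
  · exact (h y hy hne).le

lemma uQ_pair_lt (a b : Fin n) (hab : a < b) :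
    uQ K n {a, b} = zQ K n ∅ a - zQ K n {b} a := by
  have hne : ({a, b} : Finset (Fin n)).Nonempty := ⟨a, by simp⟩
  have hmin : ({a, b} : Finset (Fin n)).min' hne = a := by
    apply min'_eq_of_lt
    · simp
    · intro y hy hne'
      simp only [Finset.mem_insert, Finset.mem_singleton] at hy
      rcases hy with rfl | rfl
      · exact absurd rfl hne'
      · exact hab
  have hab' : a ≠ b := hab.ne
  rw [uQ, dif_pos hne]
  simp only [hmin]
  have herase : ({a, b} : Finset (Fin n)).erase a = {b} := by
    rw [Finset.erase_insert (by simp [hab'])]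
  have hcard : ({a, b} : Finset (Fin n)).card = 2 := by
    rw [Finset.card_insert_of_notMem (by simp [hab']), Finset.card_singleton]
  rw [herase, hcard, show ({b} : Finset (Fin n)) = insert b ∅ from rfl,
    Finset.sum_powerset_insert (Finset.notMem_empty b),
    Finset.powerset_empty, Finset.sum_singleton, Finset.sum_singleton]
  have c0 : (∅ : Finset (Fin n)).card = 0 := Finset.card_empty
  have c1 : (insert b (∅ : Finset (Fin n))).card = 1 := by simp
  rw [c0, c1]
  exact g2' (zQ K n ∅ a) (zQ K n (insert b ∅) a)

lemma uQ_triple_lt (a b c : Fin n) (hab : a < b) (hac : a < c) (hbc : b ≠ c) :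
    uQ K n {a, b, c}
      = -(zQ K n ∅ a - zQ K n {b} a - zQ K n {c} a + zQ K n {b, c} a) := by
  have hne : ({a, b, c} : Finset (Fin n)).Nonempty := ⟨a, by simp⟩
  have hmin : ({a, b, c} : Finset (Fin n)).min' hne = a := by
    apply min'_eq_of_lt
    · simp
    · intro y hy hne'
      simp only [Finset.mem_insert, Finset.mem_singleton] at hy
      rcases hy with rfl | rfl | rfl
      · exact absurd rfl hne'
      · exact hab
      · exact hac
  have hanb : a ∉ ({b, c} : Finset (Fin n)) := by simp [hab.ne, hac.ne]
  have herase : ({a, b, c} : Finset (Fin n)).erase a = {b, c} := Finset.erase_insert hanb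
  have hcard : ({a, b, c} : Finset (Fin n)).card = 3 := by
    rw [Finset.card_insert_of_notMem hanb,
      Finset.card_insert_of_notMem (by simp [hbc]), Finset.card_singleton]
  rw [uQ, dif_pos hne]
  simp only [hmin]
  rw [herase, hcard,
    Finset.sum_powerset_insert (by simp [hbc] : b ∉ ({c} : Finset (Fin n))),
    show ({c} : Finset (Fin n)) = insert c ∅ from rfl,
    Finset.sum_powerset_insert (Finset.notMem_empty c),
    Finset.sum_powerset_insert (Finset.notMem_empty c),
    Finset.powerset_empty, Finset.sum_singleton, Finset.sum_singleton,
    Finset.sum_singleton, Finset.sum_singleton]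
  have c0 : (∅ : Finset (Fin n)).card = 0 := Finset.card_empty
  have c1c : (insert c (∅ : Finset (Fin n))).card = 1 := by simp
  have c1b : (insert b (∅ : Finset (Fin n))).card = 1 := by simp
  have c2 : (insert b (insert c (∅ : Finset (Fin n)))).card = 2 := by
    simp [Finset.mem_insert, hbc]
  rw [c0, c1c, c1b, c2]
  exact g3' (zQ K n ∅ a) (zQ K n (insert c ∅) a) (zQ K n (insert b ∅) a)
    (zQ K n (insert b (insert c ∅)) a)

lemma uQ_quad_lt (a b c d : Fin n) (hab : a < b) (hac : a < c) (had : a < d)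
    (hbc : b ≠ c) (hbd : b ≠ d) (hcd : c ≠ d) :
    uQ K n {a, b, c, d}
      = zQ K n ∅ a - zQ K n {b} a - zQ K n {c} a - zQ K n {d} a
          + zQ K n {b, c} a + zQ K n {b, d} a + zQ K n {c, d} a - zQ K n {b, c, d} a := by
  have hne : ({a, b, c, d} : Finset (Fin n)).Nonempty := ⟨a, by simp⟩
  have hmin : ({a, b, c, d} : Finset (Fin n)).min' hne = a := by
    apply min'_eq_of_lt
    · simp
    · intro y hy hne'
      simp only [Finset.mem_insert, Finset.mem_singleton] at hy
      rcases hy with rfl | rfl | rfl | rfl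
      · exact absurd rfl hne'
      · exact hab
      · exact hac
      · exact had
  have hanb : a ∉ ({b, c, d} : Finset (Fin n)) := by simp [hab.ne, hac.ne, had.ne]
  have herase : ({a, b, c, d} : Finset (Fin n)).erase a = {b, c, d} := Finset.erase_insert hanb
  have hcard : ({a, b, c, d} : Finset (Fin n)).card = 4 := by
    rw [Finset.card_insert_of_notMem hanb,
      Finset.card_insert_of_notMem (by simp [hbc, hbd]),
      Finset.card_insert_of_notMem (by simp [hcd]), Finset.card_singleton]
  rw [uQ, dif_pos hne]
  simp only [hmin]
  rw [herase, hcard,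
    Finset.sum_powerset_insert (by simp [hbc, hbd] : b ∉ ({c, d} : Finset (Fin n))),
    Finset.sum_powerset_insert (by simp [hcd] : c ∉ ({d} : Finset (Fin n))),
    Finset.sum_powerset_insert (by simp [hcd] : c ∉ ({d} : Finset (Fin n))),
    show ({d} : Finset (Fin n)) = insert d ∅ from rfl,
    Finset.sum_powerset_insert (Finset.notMem_empty d),
    Finset.sum_powerset_insert (Finset.notMem_empty d),
    Finset.sum_powerset_insert (Finset.notMem_empty d),
    Finset.sum_powerset_insert (Finset.notMem_empty d),
    Finset.powerset_empty]
  simp only [Finset.sum_singleton]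
  have c0 : (∅ : Finset (Fin n)).card = 0 := Finset.card_empty
  have c1d : (insert d (∅ : Finset (Fin n))).card = 1 := by simp
  have c1c : (insert c (∅ : Finset (Fin n))).card = 1 := by simp
  have c1b : (insert b (∅ : Finset (Fin n))).card = 1 := by simp
  have c2cd : (insert c (insert d (∅ : Finset (Fin n)))).card = 2 := by simp [hcd]
  have c2bd : (insert b (insert d (∅ : Finset (Fin n)))).card = 2 := by simp [hbd]
  have c2bc : (insert b (insert c (∅ : Finset (Fin n)))).card = 2 := by simp [hbc]
  have c3 : (insert b (insert c (insert d (∅ : Finset (Fin n))))).card = 3 := by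
    simp [hbc, hbd, hcd]
  rw [c0, c1d, c1c, c1b, c2cd, c2bd, c2bc, c3]
  exact g4' (zQ K n ∅ a) (zQ K n (insert d ∅) a) (zQ K n (insert c ∅) a)
    (zQ K n (insert c (insert d ∅)) a) (zQ K n (insert b ∅) a)
    (zQ K n (insert b (insert d ∅)) a) (zQ K n (insert b (insert c ∅)) a)
    (zQ K n (insert b (insert c (insert d ∅))) a)

end Aux2
section Aux3
variable (K : Type*) [Field K] (n : ℕ)

/-- generic: from w + x = y + z conclude z - w = x - y -/
private lemma gswap2 {R : Type*} [Ring R] {w x y z : R} (h : w + x = y + z) :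
    z - w = x - y := by
  have : w = y + z - x := eq_sub_of_add_eq h
  rw [this]; abel

lemma uQ_pair (a b : Fin n) (hab : a ≠ b) :
    uQ K n {a, b} = zQ K n ∅ a - zQ K n {b} a := by
  rcases lt_or_gt_of_ne hab with h | h
  · exact uQ_pair_lt K n a b h
  · rw [Finset.pair_comm, uQ_pair_lt K n b a h]
    exact gswap2 (zadd K n ∅ a b (Finset.notMem_empty a) (Finset.notMem_empty b) hab)

variable (F : Set (Finset (Fin n)))

/-- u(A) vanishes in Q(F) when |A| > 2. -/
lemma ucQ_zero (hFgr : ∀ A ∈ F, A.card ≤ 2) (A : Finset (Fin n)) (hA : A.Nonempty)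
    (hcard : 2 < A.card) :
    RingQuot.mkAlgHom K (QcRel K n F) (uQ K n A) = 0 := by
  have hAF : A ∉ F := fun h => absurd (hFgr A h) (by omega)
  have h := RingQuot.mkAlgHom_rel K (QcRel.rel (K := K) (n := n) (F := F) A hA hAF)
  rwa [map_zero] at h

/-- image of the additive relation in Q(F) -/
lemma zaddc (A : Finset (Fin n)) (a b : Fin n) (ha : a ∉ A) (hb : b ∉ A) (hab : a ≠ b) :
    RingQuot.mkAlgHom K (QcRel K n F) (zQ K n (insert a A) b)
      + RingQuot.mkAlgHom K (QcRel K n F) (zQ K n A a)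
    = RingQuot.mkAlgHom K (QcRel K n F) (zQ K n (insert b A) a)
      + RingQuot.mkAlgHom K (QcRel K n F) (zQ K n A b) := by
  have h := congrArg (RingQuot.mkAlgHom K (QcRel K n F)) (zadd K n A a b ha hb hab)
  rwa [map_add, map_add] at h

/-- image of the multiplicative relation in Q(F) -/
lemma zmulc (A : Finset (Fin n)) (a b : Fin n) (ha : a ∉ A) (hb : b ∉ A) (hab : a ≠ b) :
    RingQuot.mkAlgHom K (QcRel K n F) (zQ K n (insert a A) b)
      * RingQuot.mkAlgHom K (QcRel K n F) (zQ K n A a)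
    = RingQuot.mkAlgHom K (QcRel K n F) (zQ K n (insert b A) a)
      * RingQuot.mkAlgHom K (QcRel K n F) (zQ K n A b) := by
  have h := congrArg (RingQuot.mkAlgHom K (QcRel K n F)) (zmul K n A a b ha hb hab)
  rwa [map_mul, map_mul] at h

end Aux3
section Aux4
variable (K : Type*) [Field K] (n : ℕ) (F : Set (Finset (Fin n)))

/-- The image of `z_{A,a}` in `Q(F)`. -/
noncomputable def Zc (A : Finset (Fin n)) (a : Fin n) : Qc K n F :=
  RingQuot.mkAlgHom K (QcRel K n F) (zQ K n A a)

private lemma min3 (a b c : Fin n) (hab : a ≠ b) (hac : a ≠ c) (hbc : b ≠ c) :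
    (a < b ∧ a < c) ∨ (b < a ∧ b < c) ∨ (c < a ∧ c < b) := by
  rcases lt_or_gt_of_ne hab with h | h
  · rcases lt_or_gt_of_ne hac with h2 | h2
    · exact Or.inl ⟨h, h2⟩
    · exact Or.inr (Or.inr ⟨h2, h2.trans h⟩)
  · rcases lt_or_gt_of_ne hbc with h2 | h2
    · exact Or.inr (Or.inl ⟨h, h2⟩)
    · exact Or.inr (Or.inr ⟨h2.trans h, h2⟩)

private lemma min4 (a b c d : Fin n) (hab : a ≠ b) (hac : a ≠ c) (had : a ≠ d)
    (hbc : b ≠ c) (hbd : b ≠ d) (hcd : c ≠ d) :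
    (a < b ∧ a < c ∧ a < d) ∨ (b < a ∧ b < c ∧ b < d)
      ∨ (c < a ∧ c < b ∧ c < d) ∨ (d < a ∧ d < b ∧ d < c) := by
  rcases min3 n a b c hab hac hbc with ⟨h1, h2⟩ | ⟨h1, h2⟩ | ⟨h1, h2⟩
  · rcases lt_or_gt_of_ne had with h3 | h3
    · exact Or.inl ⟨h1, h2, h3⟩
    · exact Or.inr (Or.inr (Or.inr ⟨h3, h3.trans h1, h3.trans h2⟩))
  · rcases lt_or_gt_of_ne hbd with h3 | h3
    · exact Or.inr (Or.inl ⟨h1, h2, h3⟩)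
    · exact Or.inr (Or.inr (Or.inr ⟨h3.trans h1, h3, h3.trans h2⟩))
  · rcases lt_or_gt_of_ne hcd with h3 | h3
    · exact Or.inr (Or.inr (Or.inl ⟨h1, h2, h3⟩))
    · exact Or.inr (Or.inr (Or.inr ⟨h3.trans h1, h3.trans h2, h3⟩))

lemma swap3c (m x y : Fin n) (hmx : m ≠ x) (hmy : m ≠ y) (hxy : x ≠ y) :
    Zc K n F ∅ m - Zc K n F {x} m - Zc K n F {y} m + Zc K n F {x, y} m
      = Zc K n F ∅ x - Zc K n F {m} x - Zc K n F {y} x + Zc K n F {m, y} x := by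
  have h1 : Zc K n F {x, y} m + Zc K n F {y} x = Zc K n F {m, y} x + Zc K n F {y} m :=
    zaddc K n F {y} x m (by simp [hxy]) (by simp [hmy]) (fun h => hmx h.symm)
  have h2 : Zc K n F {x} m + Zc K n F ∅ x = Zc K n F {m} x + Zc K n F ∅ m :=
    zaddc K n F ∅ x m (Finset.notMem_empty x) (Finset.notMem_empty m) (fun h => hmx h.symm)
  exact glin3 (R := Qc K n F) h1 h2

lemma swap4c (m x y z : Fin n) (hmx : m ≠ x) (hmy : m ≠ y) (hmz : m ≠ z)
    (hxy : x ≠ y) (hxz : x ≠ z) (hyz : y ≠ z) :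
    Zc K n F ∅ m - Zc K n F {x} m - Zc K n F {y} m - Zc K n F {z} m
        + Zc K n F {x, y} m + Zc K n F {x, z} m + Zc K n F {y, z} m - Zc K n F {x, y, z} m
      = Zc K n F ∅ x - Zc K n F {m} x - Zc K n F {y} x - Zc K n F {z} x
        + Zc K n F {m, y} x + Zc K n F {m, z} x + Zc K n F {y, z} x - Zc K n F {m, y, z} x := by
  have hxm : x ≠ m := fun h => hmx h.symm
  have h1 : Zc K n F {x} m + Zc K n F ∅ x = Zc K n F {m} x + Zc K n F ∅ m :=
    zaddc K n F ∅ x m (Finset.notMem_empty x) (Finset.notMem_empty m) hxm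
  have h2 : Zc K n F {x, y} m + Zc K n F {y} x = Zc K n F {m, y} x + Zc K n F {y} m :=
    zaddc K n F {y} x m (by simp [hxy]) (by simp [hmy]) hxm
  have h3 : Zc K n F {x, z} m + Zc K n F {z} x = Zc K n F {m, z} x + Zc K n F {z} m :=
    zaddc K n F {z} x m (by simp [hxz]) (by simp [hmz]) hxm
  have h4 : Zc K n F {x, y, z} m + Zc K n F {y, z} x
      = Zc K n F {m, y, z} x + Zc K n F {y, z} m :=
    zaddc K n F {y, z} x m (by simp [hxy, hxz]) (by simp [hmy, hmz]) hxm
  exact glin4 (R := Qc K n F) h1 h2 h3 h4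

lemma triple_zeroc (hFgr : ∀ A ∈ F, A.card ≤ 2) (m x y : Fin n)
    (hmx : m ≠ x) (hmy : m ≠ y) (hxy : x ≠ y) :
    Zc K n F ∅ m - Zc K n F {x} m - Zc K n F {y} m + Zc K n F {x, y} m = 0 := by
  have base : ∀ a b c : Fin n, a < b → a < c → b ≠ c →
      Zc K n F ∅ a - Zc K n F {b} a - Zc K n F {c} a + Zc K n F {b, c} a = 0 := by
    intro a b c h1 h2 h3
    have hc : ({a, b, c} : Finset (Fin n)).card = 3 := by
      rw [Finset.card_insert_of_notMem (by simp [h1.ne, h2.ne]),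
        Finset.card_insert_of_notMem (by simp [h3]), Finset.card_singleton]
    have hu : RingQuot.mkAlgHom K (QcRel K n F) (uQ K n {a, b, c}) = 0 :=
      ucQ_zero K n F hFgr {a, b, c} ⟨a, by simp⟩ (by rw [hc]; omega)
    rw [uQ_triple_lt K n a b c h1 h2 h3] at hu
    have hneg : RingQuot.mkAlgHom K (QcRel K n F)
        (-(zQ K n ∅ a - zQ K n {b} a - zQ K n {c} a + zQ K n {b, c} a))
        = -(RingQuot.mkAlgHom K (QcRel K n F)
            (zQ K n ∅ a - zQ K n {b} a - zQ K n {c} a + zQ K n {b, c} a)) :=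
          map_neg (RingQuot.mkAlgHom K (QcRel K n F)) _
    rw [hneg] at hu
    have hT := gneg_zero (R := Qc K n F) hu
    have hexp : RingQuot.mkAlgHom K (QcRel K n F)
        (zQ K n ∅ a - zQ K n {b} a - zQ K n {c} a + zQ K n {b, c} a)
        = Zc K n F ∅ a - Zc K n F {b} a - Zc K n F {c} a + Zc K n F {b, c} a := by
      simp only [map_add, map_sub]
      rfl
    rw [hexp] at hT
    exact hT
  rcases min3 n m x y hmx hmy hxy with ⟨h1, h2⟩ | ⟨h1, h2⟩ | ⟨h1, h2⟩
  · exact base m x y h1 h2 hxy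
  · rw [swap3c K n F m x y hmx hmy hxy]
    exact base x m y h1 h2 hmy
  · have hsym : Zc K n F ∅ m - Zc K n F {x} m - Zc K n F {y} m + Zc K n F {x, y} m
        = Zc K n F ∅ m - Zc K n F {y} m - Zc K n F {x} m + Zc K n F {y, x} m := by
      rw [Finset.pair_comm x y]
      exact gcomm3 (R := Qc K n F) _ _ _ _
    rw [hsym, swap3c K n F m y x hmy hmx (fun h => hxy h.symm)]
    exact base y m x h1 h2 hmx
end Aux4
section Aux5
variable (K : Type*) [Field K] (n : ℕ) (F : Set (Finset (Fin n)))

lemma quad_zeroc (hFgr : ∀ A ∈ F, A.card ≤ 2) (m x y z : Fin n)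
    (hmx : m ≠ x) (hmy : m ≠ y) (hmz : m ≠ z)
    (hxy : x ≠ y) (hxz : x ≠ z) (hyz : y ≠ z) :
    Zc K n F ∅ m - Zc K n F {x} m - Zc K n F {y} m - Zc K n F {z} m
      + Zc K n F {x, y} m + Zc K n F {x, z} m + Zc K n F {y, z} m
      - Zc K n F {x, y, z} m = 0 := by
  have base : ∀ a b c d : Fin n, a < b → a < c → a < d → b ≠ c → b ≠ d → c ≠ d →
      Zc K n F ∅ a - Zc K n F {b} a - Zc K n F {c} a - Zc K n F {d} a
        + Zc K n F {b, c} a + Zc K n F {b, d} a + Zc K n F {c, d} a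
        - Zc K n F {b, c, d} a = 0 := by
    intro a b c d h1 h2 h3 hbc hbd hcd
    have hc : ({a, b, c, d} : Finset (Fin n)).card = 4 := by
      rw [Finset.card_insert_of_notMem (by simp [h1.ne, h2.ne, h3.ne]),
        Finset.card_insert_of_notMem (by simp [hbc, hbd]),
        Finset.card_insert_of_notMem (by simp [hcd]), Finset.card_singleton]
    have hu : RingQuot.mkAlgHom K (QcRel K n F) (uQ K n {a, b, c, d}) = 0 :=
      ucQ_zero K n F hFgr {a, b, c, d} ⟨a, by simp⟩ (by rw [hc]; omega)
    rw [uQ_quad_lt K n a b c d h1 h2 h3 hbc hbd hcd] at hu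
    have hexp : RingQuot.mkAlgHom K (QcRel K n F)
        (zQ K n ∅ a - zQ K n {b} a - zQ K n {c} a - zQ K n {d} a
          + zQ K n {b, c} a + zQ K n {b, d} a + zQ K n {c, d} a - zQ K n {b, c, d} a)
        = Zc K n F ∅ a - Zc K n F {b} a - Zc K n F {c} a - Zc K n F {d} a
          + Zc K n F {b, c} a + Zc K n F {b, d} a + Zc K n F {c, d} a
          - Zc K n F {b, c, d} a := by
      simp only [map_add, map_sub]
      rfl
    rw [hexp] at hu
    exact hu
  rcases min4 n m x y z hmx hmy hmz hxy hxz hyz with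
    ⟨h1, h2, h3⟩ | ⟨h1, h2, h3⟩ | ⟨h1, h2, h3⟩ | ⟨h1, h2, h3⟩
  · exact base m x y z h1 h2 h3 hxy hxz hyz
  · rw [swap4c K n F m x y z hmx hmy hmz hxy hxz hyz]
    exact base x m y z h1 h2 h3 hmy hmz hyz
  · have e1 : ({y, x} : Finset (Fin n)) = {x, y} := Finset.pair_comm y x
    have e2 : ({y, x, z} : Finset (Fin n)) = {x, y, z} := by
      ext t; simp; tauto
    have hsym : Zc K n F ∅ m - Zc K n F {x} m - Zc K n F {y} m - Zc K n F {z} m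
        + Zc K n F {x, y} m + Zc K n F {x, z} m + Zc K n F {y, z} m
        - Zc K n F {x, y, z} m
        = Zc K n F ∅ m - Zc K n F {y} m - Zc K n F {x} m - Zc K n F {z} m
        + Zc K n F {y, x} m + Zc K n F {y, z} m + Zc K n F {x, z} m
        - Zc K n F {y, x, z} m := by
      rw [e1, e2]
      exact gperm_xy (R := Qc K n F) _ _ _ _ _ _ _ _
    rw [hsym, swap4c K n F m y x z hmy hmx hmz (fun h => hxy h.symm) hyz hxz]
    exact base y m x z h1 h2 h3 hmx hmz hxz
  · have e1 : ({z, y} : Finset (Fin n)) = {y, z} := Finset.pair_comm z y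
    have e2 : ({z, x} : Finset (Fin n)) = {x, z} := Finset.pair_comm z x
    have e3 : ({y, x} : Finset (Fin n)) = {x, y} := Finset.pair_comm y x
    have e4 : ({z, y, x} : Finset (Fin n)) = {x, y, z} := by
      ext t; simp; tauto
    have hsym : Zc K n F ∅ m - Zc K n F {x} m - Zc K n F {y} m - Zc K n F {z} m
        + Zc K n F {x, y} m + Zc K n F {x, z} m + Zc K n F {y, z} m
        - Zc K n F {x, y, z} m
        = Zc K n F ∅ m - Zc K n F {z} m - Zc K n F {y} m - Zc K n F {x} m
        + Zc K n F {z, y} m + Zc K n F {z, x} m + Zc K n F {y, x} m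
        - Zc K n F {z, y, x} m := by
      rw [e4, e1, e2, e3]
      exact gperm_xz (R := Qc K n F) _ _ _ _ _ _ _ _
    rw [hsym, swap4c K n F m z y x hmz hmy hmx (fun h => hyz h.symm) (fun h => hxz h.symm)
      (fun h => hxy h.symm)]
    exact base z m y x h1 h3 h2 hmy hmx (fun h => hxy h.symm)
end Aux5
/-- For a graph `F` and pairwise distinct `i, j, k, l`,
`[u(ik), u(jl)] = [u(jk), u(il)]` in `Q(F)`. -/
theorem graph_commutator_symmetry (K : Type*) [Field K] (n : ℕ)
    (F : Set (Finset (Fin n)))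
    (hFne : ∀ A ∈ F, A.Nonempty)
    (hFsing : ∀ i : Fin n, ({i} : Finset (Fin n)) ∈ F)
    (hFdown : ∀ A ∈ F, ∀ B ⊆ A, B.Nonempty → B ∈ F)
    (hFgr : ∀ A ∈ F, A.card ≤ 2)
    (i j k l : Fin n) (hij : i ≠ j) (hik : i ≠ k) (hil : i ≠ l)
    (hjk : j ≠ k) (hjl : j ≠ l) (hkl : k ≠ l) :
    uc K n F {i, k} * uc K n F {j, l} - uc K n F {j, l} * uc K n F {i, k} =
      uc K n F {j, k} * uc K n F {i, l} - uc K n F {i, l} * uc K n F {j, k} := by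
  -- pair fact : Z_{b} a = Z_∅ a - u({a,b})
  have hpair : ∀ a b : Fin n, a ≠ b →
      Zc K n F {b} a = Zc K n F ∅ a - uc K n F {a, b} := by
    intro a b hab
    have hu : uc K n F {a, b} = Zc K n F ∅ a - Zc K n F {b} a := by
      rw [uc, uQ_pair K n a b hab]
      exact map_sub (RingQuot.mkAlgHom K (QcRel K n F)) _ _
    exact gpair (R := Qc K n F) hu
  -- triple fact : Z_{x,y} m = Z_∅ m - u(mx) - u(my)
  have htrip : ∀ m x y : Fin n, m ≠ x → m ≠ y → x ≠ y →
      Zc K n F {x, y} m = Zc K n F ∅ m - uc K n F {m, x} - uc K n F {m, y} := by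
    intro m x y hmx hmy hxy
    exact gt3 (R := Qc K n F) (triple_zeroc K n F hFgr m x y hmx hmy hxy)
      (hpair m x hmx) (hpair m y hmy)
  -- quad fact : Z_{x,y,z} m = Z_∅ m - u(mx) - u(my) - u(mz)
  have hquad : ∀ m x y z : Fin n, m ≠ x → m ≠ y → m ≠ z → x ≠ y → x ≠ z → y ≠ z →
      Zc K n F {x, y, z} m
        = Zc K n F ∅ m - uc K n F {m, x} - uc K n F {m, y} - uc K n F {m, z} := by
    intro m x y z hmx hmy hmz hxy hxz hyz
    exact gt4 (R := Qc K n F) (quad_zeroc K n F hFgr m x y z hmx hmy hmz hxy hxz hyz)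
      (hpair m x hmx) (hpair m y hmy) (hpair m z hmz)
      (htrip m x y hmx hmy hxy) (htrip m x z hmx hmz hxz) (htrip m y z hmy hmz hyz)
  have Ecomm : uc K n F {j, i} = uc K n F {i, j} := by rw [Finset.pair_comm]
  -- the four multiplicative relations
  have M0 : Zc K n F {i} j * Zc K n F ∅ i = Zc K n F {j} i * Zc K n F ∅ j :=
    zmulc K n F ∅ i j (Finset.notMem_empty i) (Finset.notMem_empty j) hij
  have Mk : Zc K n F {i, k} j * Zc K n F {k} i = Zc K n F {j, k} i * Zc K n F {k} j :=
    zmulc K n F {k} i j (by simp [hik]) (by simp [hjk]) hij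
  have Ml : Zc K n F {i, l} j * Zc K n F {l} i = Zc K n F {j, l} i * Zc K n F {l} j :=
    zmulc K n F {l} i j (by simp [hil]) (by simp [hjl]) hij
  have Mkl : Zc K n F {i, k, l} j * Zc K n F {k, l} i
      = Zc K n F {j, k, l} i * Zc K n F {k, l} j :=
    zmulc K n F {k, l} i j (by simp [hik, hil]) (by simp [hjk, hjl]) hij
  rw [hpair j i hij.symm, hpair i j hij, Ecomm] at M0
  rw [htrip j i k hij.symm hjk hik, hpair i k hik, htrip i j k hij hik hjk,
    hpair j k hjk, Ecomm] at Mk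
  rw [htrip j i l hij.symm hjl hil, hpair i l hil, htrip i j l hij hil hjl,
    hpair j l hjl, Ecomm] at Ml
  rw [hquad j i k l hij.symm hjk hjl hik hil hkl, htrip i k l hik hil hkl,
    hquad i j k l hij hik hil hjk hjl hkl, htrip j k l hjk hjl hkl, Ecomm] at Mkl
  exact cert (R := Qc K n F) M0 Mk Ml Mkl
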